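/- For n ≥ 6, the cycle C_n has multiset dimension 3; in particular, with vertices labelled v_0,...,v_{n−1} cyclically, the set W = {v_0, v_1, v_3} is an m-resolving set of C_n. -/

import Mathlib

open SimpleGraph

/-- The multiset of distances from `v` to the vertices of `W`. -/
noncomputable def mrep {V : Type*} (G : SimpleGraph V) (W : Finset V) (v : V) : Multiset ℕ :=
  W.val.map (fun w => G.dist v w)

/-- `W` is an m-resolving set of `G`: distinct vertices have distinct
representation multisets. -/
def IsMResolving {V : Type*} (G : SimpleGraph V) (W : Finset V) : Prop :=
  ∀ u v : V, u ≠ v → mrep G W u ≠ mrep G W v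

/-- The multiset dimension of `G`, equal to `⊤` if `G` has no m-resolving set. -/
noncomputable def mdim {V : Type*} (G : SimpleGraph V) : ℕ∞ :=
  ⨅ W : {W : Finset V // IsMResolving G W}, (W.1.card : ℕ∞)

section portfix

open scoped Fin.CommRing Fin.NatCast

section aux

variable {n : ℕ}

lemma aux_mod_out {a c : ℕ} (h : a % n = c) (h2 : a < 2 * n) (h3 : c < n) :
    a = c ∨ a = c + n := by
  rcases Nat.lt_or_ge a n with h4 | h4
  · left; rwa [Nat.mod_eq_of_lt h4] at h
  · right
    rw [Nat.mod_eq_sub_mod h4, Nat.mod_eq_of_lt (by omega)] at h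
    omega

lemma aux_val_one (hn : 2 ≤ n) [NeZero n] : (1 : Fin n).val = 1 := by
  rw [Fin.val_one']
  exact Nat.mod_eq_of_lt hn

lemma aux_walk_exists (hn : 2 ≤ n) (u : Fin n) (k : ℕ) :
    haveI : NeZero n := ⟨by omega⟩
    ∃ p : (cycleGraph n).Walk u (u + (k : Fin n)), p.length = k := by
  haveI : NeZero n := ⟨by omega⟩
  induction k with
  | zero =>
    refine ⟨Walk.nil.copy rfl (by push_cast; ring), ?_⟩
    simp
  | succ k ih =>
    obtain ⟨p, hp⟩ := ih
    have hadj : (cycleGraph n).Adj (u + (k : Fin n)) (u + (k : Fin n) + 1) := by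
      rw [cycleGraph_adj']
      right
      rw [show u + (k : Fin n) + 1 - (u + (k : Fin n)) = 1 by ring]
      exact aux_val_one hn
    refine ⟨(p.concat hadj).copy rfl (by push_cast; ring), ?_⟩
    rw [Walk.length_copy, Walk.length_concat, hp]

lemma aux_dist_le (hn : 2 ≤ n) (u v : Fin n) :
    (cycleGraph n).dist u v ≤ (v - u).val := by
  haveI : NeZero n := ⟨by omega⟩
  obtain ⟨p, hp⟩ := aux_walk_exists hn u ((v - u).val)
  have he : u + (((v - u).val : ℕ) : Fin n) = v := by
    rw [Fin.cast_val_eq_self]; ring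
  calc (cycleGraph n).dist u v ≤ (p.copy rfl he).length := dist_le _
  _ = (v - u).val := by rw [Walk.length_copy, hp]

lemma aux_walk_decomp (hn : 2 ≤ n) {u v : Fin n} (p : (cycleGraph n).Walk u v) :
    haveI : NeZero n := ⟨by omega⟩
    ∃ P Q : ℕ, P + Q = p.length ∧ v - u = (P : Fin n) - (Q : Fin n) := by
  haveI : NeZero n := ⟨by omega⟩
  induction p with
  | nil => exact ⟨0, 0, by simp, by simp⟩
  | @cons u w v h q ih =>
    obtain ⟨P, Q, h1, h2⟩ := ih
    have hvu : v - u = (v - w) + (w - u) := by ring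
    rcases cycleGraph_adj'.mp h with h3 | h3
    · -- (u - w).val = 1, so w - u = -1
      have hwu : w - u = -1 := by
        have : u - w = 1 := Fin.ext (by rw [h3, aux_val_one hn])
        rw [show w - u = -(u - w) by ring, this]
      refine ⟨P, Q + 1, by simp [Walk.length_cons]; omega, ?_⟩
      rw [hvu, h2, hwu]
      push_cast
      ring
    · -- (w - u).val = 1
      have hwu : w - u = 1 := Fin.ext (by rw [h3, aux_val_one hn])
      refine ⟨P + 1, Q, by simp [Walk.length_cons]; omega, ?_⟩
      rw [hvu, h2, hwu]
      push_cast
      ring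

lemma aux_sub_add (hn : 2 ≤ n) (u w : Fin n) :
    (u - w).val + (w - u).val = 0 ∨ (u - w).val + (w - u).val = n := by
  haveI : NeZero n := ⟨by omega⟩
  have h : ((u - w) + (w - u)) = (0 : Fin n) := by ring
  have h2 : ((u - w).val + (w - u).val) % n = 0 := by
    have := congrArg Fin.val h
    rwa [Fin.val_add, Fin.val_zero] at this
  have := (u - w).isLt
  have := (w - u).isLt
  have := aux_mod_out (n := n) h2 (by omega) (by omega)
  omega

lemma aux_sub_val (hn : 2 ≤ n) (u w : Fin n) :
    (u - w).val + w.val = u.val ∨ (u - w).val + w.val = u.val + n := by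
  haveI : NeZero n := ⟨by omega⟩
  have h : ((u - w) + w) = u := by ring
  have h2 : ((u - w).val + w.val) % n = u.val := by
    have := congrArg Fin.val h
    rwa [Fin.val_add] at this
  have := (u - w).isLt
  have := w.isLt
  have := u.isLt
  exact aux_mod_out (n := n) h2 (by omega) (by omega)

lemma cycle_dist (hn : 2 ≤ n) (u v : Fin n) :
    (cycleGraph n).dist u v = min ((v - u).val) ((u - v).val) := by
  haveI : NeZero n := ⟨by omega⟩
  apply le_antisymm
  · apply le_min (aux_dist_le hn u v)
    rw [dist_comm]
    exact aux_dist_le hn v u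
  · rcases eq_or_ne u v with rfl | hne
    · simp
    · have hr : (cycleGraph n).Reachable u v := by
        obtain ⟨p, _⟩ := aux_walk_exists hn u ((v - u).val)
        have he : u + (((v - u).val : ℕ) : Fin n) = v := by
          rw [Fin.cast_val_eq_self]; ring
        exact ⟨p.copy rfl he⟩
      obtain ⟨p, hp⟩ := hr.exists_walk_length_eq_dist
      obtain ⟨P, Q, h1, h2⟩ := aux_walk_decomp hn p
      rw [← hp, ← h1]
      set a := (v - u).val with ha
      set b := (u - v).val with hb
      have hab : a + b = 0 ∨ a + b = n := by
        have := aux_sub_add hn v u; omega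
      have hane : a + b = n := by
        rcases hab with h | h
        · exfalso
          apply hne
          have hvu0 : v - u = 0 := Fin.ext (by simp only [Fin.val_zero]; omega)
          exact (sub_eq_zero.mp hvu0).symm
        · exact h
      by_contra hcon
      push_neg at hcon
      have hQ : Q < n := by omega
      have hP : P < n := by
        have := (v - u).isLt; omega
      -- from h2 : v - u = P - Q, get (a + Q) % n = P
      have h3 : (v - u) + (Q : Fin n) = (P : Fin n) := by rw [h2]; ring
      have h4 : (a + Q % n) % n = P % n := by
        have := congrArg Fin.val h3
        rwa [Fin.val_add, Fin.val_natCast, Fin.val_natCast] at this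
      rw [Nat.mod_eq_of_lt hQ, Nat.mod_eq_of_lt hP, Nat.mod_eq_of_lt (by omega)] at h4
      omega

lemma aux_min {a b n : ℕ} (h1 : a < n) (h2 : b < n) (h3 : a + b = 0 ∨ a + b = n) :
    min b a = min a (n - a) := by omega

lemma aux_key (hn : 6 ≤ n) (u : Fin n) (k : ℕ) (hk : k < n) :
    ∃ a : ℕ, (cycleGraph n).dist u ⟨k, hk⟩ = min a (n - a) ∧ a < n ∧
      (a + k = u.val ∨ a + k = u.val + n) := by
  haveI : NeZero n := ⟨by omega⟩
  refine ⟨(u - ⟨k, hk⟩).val, ?_, (u - ⟨k, hk⟩).isLt, aux_sub_val (by omega) u ⟨k, hk⟩⟩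
  exact (cycle_dist (by omega) u ⟨k, hk⟩).trans
    (aux_min (u - ⟨k, hk⟩).isLt (⟨k, hk⟩ - u).isLt (aux_sub_add (by omega) u ⟨k, hk⟩))

lemma pair_eq {a b a' b' : ℕ} (h : (a ::ₘ {b} : Multiset ℕ) = a' ::ₘ {b'}) :
    (a = a' ∧ b = b') ∨ (a = b' ∧ b = a') := by
  have ha : a ∈ (a' ::ₘ {b'} : Multiset ℕ) := h ▸ Multiset.mem_cons_self a _
  rcases Multiset.mem_cons.mp ha with h1 | h1
  · subst h1
    left
    exact ⟨rfl, Multiset.singleton_inj.mp (Multiset.cons_inj_right a |>.mp h)⟩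
  · rw [Multiset.mem_singleton] at h1
    subst h1
    right
    refine ⟨rfl, ?_⟩
    have : (a ::ₘ {b} : Multiset ℕ) = a ::ₘ {a'} := by
      rw [h]
      show (a' ::ₘ a ::ₘ 0 : Multiset ℕ) = a ::ₘ a' ::ₘ 0
      exact Multiset.cons_swap a' a 0
    exact Multiset.singleton_inj.mp (Multiset.cons_inj_right a |>.mp this)

lemma triple_eq {a b c a' b' c' : ℕ}
    (h : (a ::ₘ b ::ₘ {c} : Multiset ℕ) = a' ::ₘ b' ::ₘ {c'}) :
    (a = a' ∧ b = b' ∧ c = c') ∨ (a = a' ∧ b = c' ∧ c = b') ∨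
    (a = b' ∧ b = a' ∧ c = c') ∨ (a = b' ∧ b = c' ∧ c = a') ∨
    (a = c' ∧ b = a' ∧ c = b') ∨ (a = c' ∧ b = b' ∧ c = a') := by
  have ha : a ∈ (a' ::ₘ b' ::ₘ {c'} : Multiset ℕ) := h ▸ Multiset.mem_cons_self a _
  rcases Multiset.mem_cons.mp ha with h1 | h1
  · subst h1
    have h2 := Multiset.cons_inj_right a |>.mp h
    rcases pair_eq h2 with ⟨h3, h4⟩ | ⟨h3, h4⟩
    · exact Or.inl ⟨rfl, h3, h4⟩
    · exact Or.inr (Or.inl ⟨rfl, h3, h4⟩)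
  · rcases Multiset.mem_cons.mp h1 with h2 | h2
    · subst h2
      have h3 : (a ::ₘ b ::ₘ {c} : Multiset ℕ) = a ::ₘ a' ::ₘ {c'} := by
        rw [h, Multiset.cons_swap]
      have h4 := Multiset.cons_inj_right a |>.mp h3
      rcases pair_eq h4 with ⟨h5, h6⟩ | ⟨h5, h6⟩
      · exact Or.inr (Or.inr (Or.inl ⟨rfl, h5, h6⟩))
      · exact Or.inr (Or.inr (Or.inr (Or.inl ⟨rfl, h5, h6⟩)))
    · rw [Multiset.mem_singleton] at h2
      subst h2
      have h3 : (a ::ₘ b ::ₘ {c} : Multiset ℕ) = a ::ₘ a' ::ₘ {b'} := by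
        rw [h]
        show (a' ::ₘ b' ::ₘ a ::ₘ 0 : Multiset ℕ) = a ::ₘ a' ::ₘ b' ::ₘ 0
        rw [Multiset.cons_swap b' a, Multiset.cons_swap a' a]
      have h4 := Multiset.cons_inj_right a |>.mp h3
      rcases pair_eq h4 with ⟨h5, h6⟩ | ⟨h5, h6⟩
      · exact Or.inr (Or.inr (Or.inr (Or.inr (Or.inl ⟨rfl, h5, h6⟩))))
      · exact Or.inr (Or.inr (Or.inr (Or.inr (Or.inr ⟨rfl, h5, h6⟩))))

end aux

lemma aux_dist_refl (hn : 6 ≤ n) (x w z : Fin n) :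
    haveI : NeZero n := ⟨by omega⟩
    (cycleGraph n).dist (z - x) w = (cycleGraph n).dist x (z - w) := by
  haveI : NeZero n := ⟨by omega⟩
  rw [cycle_dist (by omega), cycle_dist (by omega),
    show w - (z - x) = x - (z - w) by ring, show z - x - w = z - w - x by ring,
    Nat.min_comm]

lemma aux_not_resolving (hn : 6 ≤ n) (W : Finset (Fin n)) (hc : W.card ≤ 2) :
    ¬ IsMResolving (cycleGraph n) W := by
  haveI : NeZero n := ⟨by omega⟩
  intro hres
  have key : ∃ c : Fin n, ∀ x : Fin n,
      mrep (cycleGraph n) W (c - x) = mrep (cycleGraph n) W x := by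
    interval_cases hcard : W.card
    · obtain rfl := Finset.card_eq_zero.mp hcard
      exact ⟨0, fun x => by simp [mrep]⟩
    · obtain ⟨a, rfl⟩ := Finset.card_eq_one.mp hcard
      refine ⟨a + a, fun x => ?_⟩
      have h1 : ({a} : Finset (Fin n)).val = {a} := rfl
      simp only [mrep, h1, Multiset.map_singleton]
      rw [aux_dist_refl hn, show a + a - a = a by ring]
    · obtain ⟨a, b, hab, rfl⟩ := Finset.card_eq_two.mp hcard
      refine ⟨a + b, fun x => ?_⟩
      have h1 : ({a, b} : Finset (Fin n)).val = a ::ₘ {b} := by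
        rw [show ({a, b} : Finset (Fin n)) = insert a {b} from rfl,
          Finset.insert_val_of_notMem (by simpa using hab)]
        rfl
      simp only [mrep, h1, Multiset.map_cons, Multiset.map_singleton]
      have e1 : (cycleGraph n).dist (a + b - x) a = (cycleGraph n).dist x b := by
        rw [aux_dist_refl hn, show a + b - a = b by ring]
      have e2 : (cycleGraph n).dist (a + b - x) b = (cycleGraph n).dist x a := by
        rw [aux_dist_refl hn, show a + b - b = a by ring]
      rw [e1, e2]
      exact Multiset.cons_swap _ _ _
  obtain ⟨c, hc'⟩ := key
  rcases eq_or_ne (c - 0) (0 : Fin n) with h0 | h0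
  · have hc0 : c = 0 := by simpa using h0
    have hne : c - 1 ≠ 1 := by
      intro h
      rw [hc0] at h
      have h2 : (0 : Fin n) = 1 + 1 := sub_eq_iff_eq_add.mp h
      have h3 := congrArg Fin.val h2
      rw [Fin.val_add, aux_val_one (by omega), Fin.val_zero,
        Nat.mod_eq_of_lt (by omega)] at h3
      omega
    exact hres _ _ hne (hc' 1)
  · exact hres _ _ h0 (hc' 0)

set_option maxHeartbeats 4000000 in
lemma crux {n x y a1 a3 c1 c3 : ℕ} (hn : 6 ≤ n) (hx : x < n) (hy : y < n) (hxy : x ≠ y)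
    (ha1 : a1 < n) (h1 : a1 + 1 = x ∨ a1 + 1 = x + n)
    (ha3 : a3 < n) (h3 : a3 + 3 = x ∨ a3 + 3 = x + n)
    (hc1 : c1 < n) (k1 : c1 + 1 = y ∨ c1 + 1 = y + n)
    (hc3 : c3 < n) (k3 : c3 + 3 = y ∨ c3 + 3 = y + n)
    (h6 : (min x (n-x) = min y (n-y) ∧ min a1 (n-a1) = min c1 (n-c1) ∧ min a3 (n-a3) = min c3 (n-c3)) ∨
          (min x (n-x) = min y (n-y) ∧ min a1 (n-a1) = min c3 (n-c3) ∧ min a3 (n-a3) = min c1 (n-c1)) ∨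
          (min x (n-x) = min c1 (n-c1) ∧ min a1 (n-a1) = min y (n-y) ∧ min a3 (n-a3) = min c3 (n-c3)) ∨
          (min x (n-x) = min c1 (n-c1) ∧ min a1 (n-a1) = min c3 (n-c3) ∧ min a3 (n-a3) = min y (n-y)) ∨
          (min x (n-x) = min c3 (n-c3) ∧ min a1 (n-a1) = min y (n-y) ∧ min a3 (n-a3) = min c1 (n-c1)) ∨
          (min x (n-x) = min c3 (n-c3) ∧ min a1 (n-a1) = min c1 (n-c1) ∧ min a3 (n-a3) = min y (n-y))) :
    False := by
  rcases h1 with h1 | h1 <;> rcases h3 with h3 | h3 <;>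
    rcases k1 with k1 | k1 <;> rcases k3 with k3 | k3 <;>
    rcases h6 with ⟨e1,e2,e3⟩|⟨e1,e2,e3⟩|⟨e1,e2,e3⟩|⟨e1,e2,e3⟩|⟨e1,e2,e3⟩|⟨e1,e2,e3⟩ <;>
    omega

set_option maxHeartbeats 1000000 in
lemma aux_resolving (n : ℕ) (hn : 6 ≤ n) :
    IsMResolving (cycleGraph n)
        {(⟨0, by linarith⟩ : Fin n), ⟨1, by linarith⟩, ⟨3, by linarith⟩} := by
  haveI : NeZero n := ⟨by linarith⟩
  have hW : ({(⟨0, by linarith⟩ : Fin n), ⟨1, by linarith⟩, ⟨3, by linarith⟩} :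
      Finset (Fin n)).val = (⟨0, by linarith⟩ : Fin n) ::ₘ (⟨1, by linarith⟩ : Fin n) ::ₘ
        {(⟨3, by linarith⟩ : Fin n)} := by
    rw [show ({(⟨0, by linarith⟩ : Fin n), ⟨1, by linarith⟩, ⟨3, by linarith⟩} : Finset (Fin n))
        = insert ⟨0, by linarith⟩ (insert ⟨1, by linarith⟩ {⟨3, by linarith⟩}) from rfl,
      Finset.insert_val_of_notMem (by simp [Fin.ext_iff]),
      Finset.insert_val_of_notMem (by simp [Fin.ext_iff])]
    rfl
  have hmrep : ∀ x : Fin n,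
      mrep (cycleGraph n) {(⟨0, by linarith⟩ : Fin n), ⟨1, by linarith⟩, ⟨3, by linarith⟩} x =
        (cycleGraph n).dist x ⟨0, by linarith⟩ ::ₘ (cycleGraph n).dist x ⟨1, by linarith⟩ ::ₘ
          {(cycleGraph n).dist x ⟨3, by linarith⟩} := by
    intro x
    rw [mrep, hW]
    simp
  intro u v huv heq
  obtain ⟨a0, hd0, ha0, hx0⟩ := aux_key hn u 0 (by linarith)
  obtain ⟨a1, hd1, ha1, hx1⟩ := aux_key hn u 1 (by linarith)
  obtain ⟨a3, hd3, ha3, hx3⟩ := aux_key hn u 3 (by linarith)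
  obtain ⟨c0, he0, hc0, hy0⟩ := aux_key hn v 0 (by linarith)
  obtain ⟨c1, he1, hc1, hy1⟩ := aux_key hn v 1 (by linarith)
  obtain ⟨c3, he3, hc3, hy3⟩ := aux_key hn v 3 (by linarith)
  rw [hmrep u, hmrep v, hd0, hd1, hd3, he0, he1, he3] at heq
  have hxy : u.val ≠ v.val := fun h => huv (Fin.ext h)
  have hu := u.isLt
  have hv := v.isLt
  have h6 := triple_eq heq
  clear heq hd0 hd1 hd3 he0 he1 he3 huv hmrep hW
  have ea0 : a0 = u.val := by clear h6; omega
  have ec0 : c0 = v.val := by clear h6; omega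
  rw [ea0] at h6
  rw [ec0] at h6
  exact crux hn hu hv hxy ha1 hx1 ha3 hx3 hc1 hy1 hc3 hy3 h6

end portfix

lemma aux_card (n : ℕ) (hn : 6 ≤ n) :
    ({(⟨0, by linarith⟩ : Fin n), ⟨1, by linarith⟩, ⟨3, by linarith⟩} :
        Finset (Fin n)).card = 3 := by
  rw [Finset.card_insert_of_notMem (by simp [Fin.ext_iff]),
    Finset.card_insert_of_notMem (by simp [Fin.ext_iff]), Finset.card_singleton]

theorem stmt_16 (n : ℕ) (hn : 6 ≤ n) :
    IsMResolving (cycleGraph n)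
        {(⟨0, by omega⟩ : Fin n), ⟨1, by omega⟩, ⟨3, by omega⟩} ∧
      mdim (cycleGraph n) = 3 := by
  refine ⟨aux_resolving n hn, le_antisymm ?_ ?_⟩
  · calc mdim (cycleGraph n) ≤ (({(⟨0, by omega⟩ : Fin n), ⟨1, by omega⟩, ⟨3, by omega⟩} :
        Finset (Fin n)).card : ℕ∞) := iInf_le (fun W : {W : Finset (Fin n) // IsMResolving (cycleGraph n) W} => (W.1.card : ℕ∞)) ⟨_, aux_resolving n hn⟩
    _ = 3 := by rw [aux_card n hn]; simp
  · rw [mdim]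
    apply le_iInf
    rintro ⟨W, hWr⟩
    show (3 : ℕ∞) ≤ (W.card : ℕ∞)
    by_contra hcon
    push_neg at hcon
    have hle : W.card ≤ 2 := by
      have := (Nat.cast_lt (α := ℕ∞)).mp (by exact_mod_cast hcon)
      omega
    exact aux_not_resolving hn W hle hWr
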